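/- For every natural number m and every real number z, one has Σ_{0≤l≤n≤m} (-1)^n · C(n,l) · C(l+(m+1)z, m-n) · (1+z)^{n-l} · (1-z)^{n+l} = (m+1) · C((m+1)z-1, m). -/

import Mathlib

open Finset PowerSeries

/-- Generalized binomial coefficient `C(x, k) = x(x-1)⋯(x-k+1)/k!` for real `x`. -/
noncomputable def gchoose (x : ℝ) (k : ℕ) : ℝ :=
  (∏ i ∈ Finset.range k, (x - i)) / (Nat.factorial k)

/-- The binomial series `(1+t)^x = Σ C(x,k) t^k` as a formal power series. -/
noncomputable def binomSeries (x : ℝ) : PowerSeries ℝ :=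
  PowerSeries.mk fun k => gchoose x k

lemma gchoose_zero (x : ℝ) : gchoose x 0 = 1 := by simp [gchoose]

lemma prod_shift (x : ℝ) (k : ℕ) :
    ∏ i ∈ Finset.range (k+1), (x + 1 - i) = (x + 1) * ∏ i ∈ Finset.range k, (x - i) := by
  rw [Finset.prod_range_succ']
  push_cast
  ring_nf

lemma gchoose_pascal (x : ℝ) (k : ℕ) :
    gchoose (x+1) (k+1) = gchoose x (k+1) + gchoose x k := by
  unfold gchoose
  rw [prod_shift, Finset.prod_range_succ, Nat.factorial_succ]
  have hk : (Nat.factorial k : ℝ) ≠ 0 := by exact_mod_cast (Nat.factorial_pos k).ne'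
  have hk1 : ((k+1 : ℕ) : ℝ) ≠ 0 := by positivity
  field_simp
  push_cast
  ring

lemma gchoose_absorb (x : ℝ) (k : ℕ) :
    (k+1 : ℝ) * gchoose x (k+1) = x * gchoose (x-1) k := by
  unfold gchoose
  have h : ∏ i ∈ Finset.range (k+1), (x - i) = x * ∏ i ∈ Finset.range k, (x - 1 - i) := by
    rw [Finset.prod_range_succ']
    push_cast
    ring_nf
  rw [h, Nat.factorial_succ]
  have hk : (Nat.factorial k : ℝ) ≠ 0 := by exact_mod_cast (Nat.factorial_pos k).ne'
  have hk1 : ((k+1 : ℕ) : ℝ) ≠ 0 := by positivity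
  push_cast
  field_simp

lemma gchoose_vandermonde (l : ℕ) (x : ℝ) (k : ℕ) :
    gchoose (x + l) k = ∑ i ∈ Finset.range (k+1), (l.choose i : ℝ) * gchoose x (k-i) := by
  induction l generalizing k with
  | zero =>
    simp [Finset.sum_range_succ']
  | succ l ih =>
    cases k with
    | zero => simp [gchoose_zero]
    | succ k =>
      have hL : gchoose (x + (l+1 : ℕ)) (k+1)
          = gchoose (x + l) (k+1) + gchoose (x + l) k := by
        have := gchoose_pascal (x + l) k
        push_cast
        push_cast at this
        convert this using 2 <;> ring
      rw [hL, ih (k+1), ih k]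
      rw [Finset.sum_range_succ' (fun i => ((l+1).choose i : ℝ) * gchoose x (k+1-i)) (k+1)]
      have hsplit : ∀ i : ℕ, (((l+1).choose (i+1) : ℕ) : ℝ) * gchoose x (k+1-(i+1))
          = (l.choose i : ℝ) * gchoose x (k-i) + (l.choose (i+1) : ℝ) * gchoose x (k-i) := by
        intro i
        rw [Nat.choose_succ_succ]
        push_cast [Nat.succ_eq_add_one]
        ring
      rw [Finset.sum_congr rfl (fun i _ => hsplit i), Finset.sum_add_distrib]
      rw [Finset.sum_range_succ' (fun i => (l.choose i : ℝ) * gchoose x (k+1-i)) (k+1)]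
      simp [Nat.succ_sub_succ]
      ring

lemma trinom (n i : ℕ) (a b : ℝ) :
    ∑ l ∈ Finset.range (n+1), (n.choose l : ℝ) * (l.choose i : ℝ) * a^(n-l) * b^l
      = (n.choose i : ℝ) * b^i * (a+b)^(n-i) := by
  rcases le_or_gt i n with h | h
  · have hsub : Finset.Ico i (n+1) ⊆ Finset.range (n+1) := by
      rw [Finset.range_eq_Ico]; exact Finset.Ico_subset_Ico (Nat.zero_le _) le_rfl
    have hzero : ∀ l ∈ Finset.range (n+1), l ∉ Finset.Ico i (n+1) →
        (n.choose l : ℝ) * (l.choose i : ℝ) * a^(n-l) * b^l = 0 := by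
      intro l hl hnot
      have hli : l < i := by
        simp only [Finset.mem_Ico, Finset.mem_range] at *
        omega
      simp [Nat.choose_eq_zero_of_lt hli]
    rw [← Finset.sum_subset hsub hzero, Finset.sum_Ico_eq_sum_range]
    have hterm : ∀ l' : ℕ, l' < n + 1 - i →
        (n.choose (i+l') : ℝ) * ((i+l').choose i : ℝ) * a^(n-(i+l')) * b^(i+l')
        = (n.choose i : ℝ) * b^i * (((n-i).choose l' : ℝ) * b^l' * a^((n-i)-l')) := by
      intro l' hl'
      have h1 : i + l' ≤ n := by omega
      have h2 : i ≤ i + l' := by omega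
      have hc := Nat.choose_mul (n := n) h2
      rw [Nat.add_sub_cancel_left] at hc
      have hcast : (n.choose (i+l') : ℝ) * ((i+l').choose i : ℝ)
          = (n.choose i : ℝ) * ((n-i).choose l' : ℝ) := by exact_mod_cast congrArg Nat.cast hc
      have hsub2 : n - (i + l') = (n - i) - l' := by omega
      have hpow : b^(i+l') = b^i * b^l' := pow_add b i l'
      rw [hsub2, hpow]
      linear_combination a ^ (n - i - l') * (b ^ i * b ^ l') * hcast
    rw [Finset.sum_congr rfl (fun l' hl' => hterm l' (Finset.mem_range.mp hl'))]
    rw [← Finset.mul_sum]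
    have hrange : n + 1 - i = (n - i) + 1 := by omega
    rw [hrange]
    have hbin : ∑ k ∈ Finset.range ((n-i)+1), ((n-i).choose k : ℝ) * b^k * a^((n-i)-k)
        = (b + a)^(n-i) := by
      rw [add_pow]
      exact Finset.sum_congr rfl fun k hk => by ring
    rw [add_comm a b, ← hbin]
  · have h1 : (n.choose i : ℝ) = 0 := by
      simp [Nat.choose_eq_zero_of_lt h]
    rw [h1]
    rw [Finset.sum_eq_zero, zero_mul, zero_mul]
    intro l hl
    have : l < i := by
      have := Finset.mem_range.mp hl; omega
    simp [Nat.choose_eq_zero_of_lt this]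

def dAux (j : ℕ) : Prop :=
  ∑ n ∈ Finset.range (j+1), ((n.choose (j-n)) : ℝ) * (-4:ℝ)^n = ((j+1 : ℕ) : ℝ) * (-2:ℝ)^j

lemma dAux_all : ∀ j, dAux j ∧ dAux (j+1) := by
  intro j
  induction j with
  | zero =>
    constructor
    · unfold dAux; norm_num
    · unfold dAux; rw [Finset.sum_range_succ, Finset.sum_range_succ]; norm_num
  | succ j ih =>
    obtain ⟨h1, h2⟩ := ih
    refine ⟨h2, ?_⟩
    unfold dAux at h1 h2 ⊢
    show ∑ n ∈ Finset.range (j+3), ((n.choose (j+2-n)) : ℝ) * (-4:ℝ)^n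
        = ((j+3 : ℕ) : ℝ) * (-2:ℝ)^(j+2)
    rw [Finset.sum_range_succ] at h2
    rw [Nat.sub_self, Nat.choose_zero_right] at h2
    rw [Finset.sum_range_succ' (fun n => ((n.choose (j+2-n)) : ℝ) * (-4:ℝ)^n) (j+2)]
    rw [Finset.sum_range_succ]
    have hz : ((Nat.choose 0 (j+2-0)) : ℝ) * (-4:ℝ)^0 = 0 := by
      simp [Nat.choose_eq_zero_of_lt]
    have htop : (((j+1+1).choose (j+2-(j+1+1))) : ℝ) * (-4:ℝ)^(j+1+1) = (-4:ℝ)^(j+2) := by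
      norm_num
    have hterm : ∀ n ∈ Finset.range (j+1),
        (((n+1).choose (j+2-(n+1))) : ℝ) * (-4:ℝ)^(n+1)
        = ((n.choose (j-n)) : ℝ) * (-4:ℝ)^(n+1) + ((n.choose (j+1-n)) : ℝ) * (-4:ℝ)^(n+1) := by
      intro n hn
      have hn' : n ≤ j := by have := Finset.mem_range.mp hn; omega
      have e1 : j+2-(n+1) = (j-n)+1 := by omega
      have e2 : (j-n)+1 = j+1-n := by omega
      rw [e1, Nat.choose_succ_succ]
      push_cast [Nat.succ_eq_add_one, e2]
      ring
    rw [Finset.sum_congr rfl hterm, Finset.sum_add_distrib, hz, htop]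
    have ea : ∑ n ∈ Finset.range (j+1), ((n.choose (j-n)) : ℝ) * (-4:ℝ)^(n+1)
        = -4 * (((j+1:ℕ):ℝ) * (-2:ℝ)^j) := by
      rw [← h1, Finset.mul_sum]
      exact Finset.sum_congr rfl fun n _ => by ring
    have eb : ∑ n ∈ Finset.range (j+1), ((n.choose (j+1-n)) : ℝ) * (-4:ℝ)^(n+1)
        = -4 * (((j+2:ℕ):ℝ) * (-2:ℝ)^(j+1) - (-4:ℝ)^(j+1)) := by
      have h2' : ∑ n ∈ Finset.range (j+1), ((n.choose (j+1-n)) : ℝ) * (-4:ℝ)^n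
          = ((j+2:ℕ):ℝ) * (-2:ℝ)^(j+1) - (-4:ℝ)^(j+1) := by
        push_cast at h2 ⊢
        linarith [h2]
      rw [← h2', Finset.mul_sum]
      exact Finset.sum_congr rfl fun n _ => by ring
    rw [ea, eb]
    push_cast
    ring

lemma dsum (j : ℕ) :
    ∑ n ∈ Finset.range (j+1), ((n.choose (j-n)) : ℝ) * (-4:ℝ)^n = (j+1) * (-2:ℝ)^j := by
  have h := (dAux_all j).1
  unfold dAux at h
  push_cast at h
  exact h

lemma csum (j : ℕ) :
    ∑ n ∈ Finset.range (j+1), (-1:ℝ)^n * (n.choose (j-n) : ℝ) * 2^(n-(j-n))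
      = (-1:ℝ)^j * (j+1) := by
  have h2j : (2:ℝ)^j ≠ 0 := by positivity
  apply mul_left_cancel₀ h2j
  rw [Finset.mul_sum]
  have hterm : ∀ n ∈ Finset.range (j+1),
      (2:ℝ)^j * ((-1:ℝ)^n * (n.choose (j-n) : ℝ) * 2^(n-(j-n)))
      = (n.choose (j-n) : ℝ) * (-4:ℝ)^n := by
    intro n hn
    have hn' : n ≤ j := by have := Finset.mem_range.mp hn; omega
    rcases le_or_gt (j-n) n with h | h
    · rw [show ((-4):ℝ) = (-1) * 2^2 by norm_num, mul_pow, ← pow_mul]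
      have h2 : (2:ℝ)^(2*n) = 2^j * 2^(n-(j-n)) := by
        rw [← pow_add]; congr 1; omega
      rw [h2]; ring
    · simp [Nat.choose_eq_zero_of_lt h]
  rw [Finset.sum_congr rfl hterm, dsum]
  rw [show (-2:ℝ) = (-1) * 2 by norm_num, mul_pow]
  ring

lemma reindex_triangle (m : ℕ) (G : ℕ → ℕ → ℝ) :
    ∑ n ∈ Finset.range (m+1), ∑ i ∈ Finset.range (m+1-n), G n i
      = ∑ j ∈ Finset.range (m+1), ∑ n ∈ Finset.range (j+1), G n (j-n) := by
  rw [Finset.sum_sigma', Finset.sum_sigma']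
  refine Finset.sum_nbij' (fun p => ⟨p.1 + p.2, p.1⟩) (fun p => ⟨p.2, p.1 - p.2⟩)
    ?_ ?_ ?_ ?_ ?_
  · rintro ⟨n, i⟩ hp
    simp only [Finset.mem_sigma, Finset.mem_range] at *
    omega
  · rintro ⟨j, n⟩ hp
    simp only [Finset.mem_sigma, Finset.mem_range] at *
    omega
  · rintro ⟨n, i⟩ hp
    simp
  · rintro ⟨j, n⟩ hp
    simp only [Finset.mem_sigma, Finset.mem_range] at hp
    have h : n + (j - n) = j := by omega
    simp [h]
  · rintro ⟨n, i⟩ hp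
    simp only [Nat.add_sub_cancel_left]

lemma step_e (m : ℕ) (z : ℝ) :
    ∑ j ∈ Finset.range (m+1), (-1:ℝ)^j * ((j:ℝ)+1) * (1-z)^j * gchoose ((m+1)*z) (m-j)
      = ((m:ℝ)+1) * gchoose ((m+1)*z - 1) m := by
  set x : ℝ := ((m:ℝ)+1)*z with hx
  set y : ℝ := z - 1 with hy
  have hpasc : ∀ k, gchoose x (k+1) = gchoose (x-1) (k+1) + gchoose (x-1) k := by
    intro k
    have := gchoose_pascal (x-1) k
    rwa [sub_add_cancel] at this
  have hrefl : ∑ j ∈ Finset.range (m+1), (-1:ℝ)^j * ((j:ℝ)+1) * (1-z)^j * gchoose x (m-j)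
      = ∑ k ∈ Finset.range (m+1), (((m:ℝ)+1) - k) * gchoose x k * y^(m-k) := by
    rw [← Finset.sum_range_reflect (fun k => (((m:ℝ)+1) - k) * gchoose x k * y^(m-k)) (m+1)]
    apply Finset.sum_congr rfl
    intro j hj
    have hjm : j ≤ m := by have := Finset.mem_range.mp hj; omega
    have e1 : m + 1 - 1 - j = m - j := by omega
    have e2 : m - (m - j) = j := by omega
    rw [e1, e2]
    have e3 : ((m:ℝ)+1) - ((m - j : ℕ):ℝ) = (j:ℝ) + 1 := by
      rw [Nat.cast_sub hjm]; ring
    have e4 : y^j = (-1:ℝ)^j * (1-z)^j := by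
      rw [show y = -(1-z) by rw [hy]; ring, neg_pow]
    rw [e3, e4]
    ring
  set B : ℝ := ∑ k ∈ Finset.range m, gchoose (x-1) k * y^(m-1-k) with hB
  set B' : ℝ := ∑ k ∈ Finset.range m, gchoose (x-1) k * y^(m-k) with hB'
  set A' : ℝ := ∑ k ∈ Finset.range (m+1), gchoose (x-1) k * y^(m-k) with hA'def
  have hA' : A' = B' + gchoose (x-1) m := by
    rw [hA'def, Finset.sum_range_succ, Nat.sub_self, pow_zero, mul_one, hB']
  have hA'2 : A' = (∑ k ∈ Finset.range m, gchoose (x-1) (k+1) * y^(m-1-k)) + y^m := by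
    rw [hA'def, Finset.sum_range_succ' (fun k => gchoose (x-1) k * y^(m-k)) m]
    rw [gchoose_zero, one_mul, Nat.sub_zero]
    congr 1
    apply Finset.sum_congr rfl
    intro k hk
    congr 2
    omega
  have hA : ∑ k ∈ Finset.range (m+1), gchoose x k * y^(m-k) = A' + B := by
    rw [Finset.sum_range_succ' (fun k => gchoose x k * y^(m-k)) m]
    rw [gchoose_zero, one_mul, Nat.sub_zero]
    have : ∀ k ∈ Finset.range m, gchoose x (k+1) * y^(m-(k+1))
        = gchoose (x-1) (k+1) * y^(m-1-k) + gchoose (x-1) k * y^(m-1-k) := by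
      intro k hk
      have ek : m - (k+1) = m-1-k := by omega
      rw [ek, hpasc k]
      ring
    rw [Finset.sum_congr rfl this, Finset.sum_add_distrib]
    rw [← hB, hA'2]
    ring
  have hk : ∑ k ∈ Finset.range (m+1), (k:ℝ) * gchoose x k * y^(m-k) = x * B := by
    rw [Finset.sum_range_succ' (fun k => (k:ℝ) * gchoose x k * y^(m-k)) m]
    rw [Nat.cast_zero, zero_mul, zero_mul, add_zero]
    rw [hB, Finset.mul_sum]
    apply Finset.sum_congr rfl
    intro k hk
    have ek : m - (k+1) = m-1-k := by omega
    have habs := gchoose_absorb x k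
    push_cast
    rw [ek]
    calc ((k:ℝ)+1) * gchoose x (k+1) * y^(m-1-k)
        = (((k:ℝ)+1) * gchoose x (k+1)) * y^(m-1-k) := by ring
      _ = (x * gchoose (x-1) k) * y^(m-1-k) := by rw [habs]
      _ = x * (gchoose (x-1) k * y^(m-1-k)) := by ring
  have hyB : y * B = B' := by
    rw [hB, hB', Finset.mul_sum]
    apply Finset.sum_congr rfl
    intro k hk
    have hkm : k < m := Finset.mem_range.mp hk
    have : y * y^(m-1-k) = y^(m-k) := by
      rw [← pow_succ']
      congr 1
      omega
    calc y * (gchoose (x-1) k * y^(m-1-k)) = gchoose (x-1) k * (y * y^(m-1-k)) := by ring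
      _ = gchoose (x-1) k * y^(m-k) := by rw [this]
  have hsplit : ∑ k ∈ Finset.range (m+1), (((m:ℝ)+1) - k) * gchoose x k * y^(m-k)
      = ((m:ℝ)+1) * (∑ k ∈ Finset.range (m+1), gchoose x k * y^(m-k))
        - ∑ k ∈ Finset.range (m+1), (k:ℝ) * gchoose x k * y^(m-k) := by
    rw [Finset.mul_sum, ← Finset.sum_sub_distrib]
    apply Finset.sum_congr rfl
    intro k _
    ring
  rw [hrefl, hsplit, hA, hk, hA']
  have hxy : x = ((m:ℝ)+1) * (y+1) := by rw [hx, hy]; ring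
  rw [hxy]
  linear_combination (-((m:ℝ)+1)) * hyB

theorem sun_wu_corollary (m : ℕ) (z : ℝ) :
    ∑ n ∈ Finset.range (m + 1), ∑ l ∈ Finset.range (n + 1),
        (-1 : ℝ) ^ n * (n.choose l : ℝ) * gchoose (l + (m + 1) * z) (m - n) *
          (1 + z) ^ (n - l) * (1 - z) ^ (n + l) =
      (m + 1) * gchoose ((m + 1) * z - 1) m := by
  set x : ℝ := ((m:ℝ)+1)*z with hx
  have inner : ∀ n ∈ Finset.range (m+1),
      ∑ l ∈ Finset.range (n + 1),
        (-1 : ℝ) ^ n * (n.choose l : ℝ) * gchoose (l + x) (m - n) *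
          (1 + z) ^ (n - l) * (1 - z) ^ (n + l)
      = ∑ i ∈ Finset.range (m+1-n),
          (-1:ℝ)^n * (n.choose i : ℝ) * 2^(n-i) * (1-z)^(n+i) * gchoose x (m-n-i) := by
    intro n hn
    have hnm : n ≤ m := by have := Finset.mem_range.mp hn; omega
    have hrange : m - n + 1 = m + 1 - n := by omega
    have step1 : ∀ l ∈ Finset.range (n+1),
        (-1 : ℝ) ^ n * (n.choose l : ℝ) * gchoose (l + x) (m - n) *
          (1 + z) ^ (n - l) * (1 - z) ^ (n + l)
        = ∑ i ∈ Finset.range (m+1-n),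
            (-1:ℝ)^n * (n.choose l : ℝ) * ((l.choose i : ℝ) * gchoose x (m-n-i)) *
              (1+z)^(n-l) * (1-z)^(n+l) := by
      intro l hl
      have hv : gchoose ((l:ℝ) + x) (m-n)
          = ∑ i ∈ Finset.range (m+1-n), (l.choose i : ℝ) * gchoose x (m-n-i) := by
        rw [add_comm, gchoose_vandermonde l x (m-n), hrange]
      rw [hv, Finset.mul_sum, Finset.sum_mul, Finset.sum_mul]
    rw [Finset.sum_congr rfl step1, Finset.sum_comm]
    apply Finset.sum_congr rfl
    intro i hi
    have htr := trinom n i (1+z) (1-z)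
    have h2 : (1+z) + (1-z) = (2:ℝ) := by ring
    rw [h2] at htr
    calc ∑ l ∈ Finset.range (n+1),
          (-1:ℝ)^n * (n.choose l : ℝ) * ((l.choose i : ℝ) * gchoose x (m-n-i)) *
            (1+z)^(n-l) * (1-z)^(n+l)
        = (-1:ℝ)^n * gchoose x (m-n-i) * (1-z)^n *
            ∑ l ∈ Finset.range (n+1), (n.choose l : ℝ) * (l.choose i : ℝ) * (1+z)^(n-l) * (1-z)^l := by
          rw [Finset.mul_sum]
          apply Finset.sum_congr rfl
          intro l hl
          have hle : l ≤ n := by have := Finset.mem_range.mp hl; omega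
          have hpow : (1-z)^(n+l) = (1-z)^n * (1-z)^l := pow_add _ _ _
          rw [hpow]
          ring
      _ = (-1:ℝ)^n * (n.choose i : ℝ) * 2^(n-i) * (1-z)^(n+i) * gchoose x (m-n-i) := by
          rw [htr, pow_add]
          ring
  rw [Finset.sum_congr rfl inner]
  rw [reindex_triangle m (fun n i =>
      (-1:ℝ)^n * (n.choose i : ℝ) * 2^(n-i) * (1-z)^(n+i) * gchoose x (m-n-i))]
  have houter : ∀ j ∈ Finset.range (m+1),
      ∑ n ∈ Finset.range (j+1),
        (-1:ℝ)^n * (n.choose (j-n) : ℝ) * 2^(n-(j-n)) * (1-z)^(n+(j-n)) * gchoose x (m-n-(j-n))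
      = (-1:ℝ)^j * ((j:ℝ)+1) * (1-z)^j * gchoose x (m-j) := by
    intro j hj
    have hjm : j ≤ m := by have := Finset.mem_range.mp hj; omega
    have hstep : ∀ n ∈ Finset.range (j+1),
        (-1:ℝ)^n * (n.choose (j-n) : ℝ) * 2^(n-(j-n)) * (1-z)^(n+(j-n)) * gchoose x (m-n-(j-n))
        = ((-1:ℝ)^n * (n.choose (j-n) : ℝ) * 2^(n-(j-n))) * ((1-z)^j * gchoose x (m-j)) := by
      intro n hn
      have hnj : n ≤ j := by have := Finset.mem_range.mp hn; omega
      have e1 : n + (j-n) = j := by omega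
      have e2 : m - n - (j-n) = m - j := by omega
      rw [e1, e2]
      ring
    rw [Finset.sum_congr rfl hstep, ← Finset.sum_mul, csum j]
    ring
  rw [Finset.sum_congr rfl houter]
  exact step_e m z
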